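/- The averaging operator acts on the basis by A_q φ_n(x; a) = φ_{n−1}(x; a q^{1/2}) · [1 − a q^{-1/2}(1 + q^n) x + a^2 q^{n−1}] for n ≥ 1. -/

import Mathlib

open Complex Finset

/-- `A_q φ_n(x;a) = φ_{n-1}(x; a q^{1/2}) [1 - a q^{-1/2}(1+qⁿ)x + a² q^{n-1}]`,
with `s = q^{1/2} > 0`, `x = cos θ`, `z = e^{iθ}`, `n ≥ 1`. -/
theorem askey_wilson_A_on_basis
    (s θ : ℝ) (hs : 0 < s) (a : ℂ) (n : ℕ) (hn : 1 ≤ n) :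
    let q : ℂ := (s : ℂ) ^ 2
    let z : ℂ := Complex.exp (θ * Complex.I)
    let P : ℂ → ℂ := fun w => ∏ k ∈ Finset.range n,
      ((1 - a * q ^ k * w) * (1 - a * q ^ k * w⁻¹))
    (P ((s : ℂ) * z) + P ((s : ℂ)⁻¹ * z)) / 2 =
      (∏ k ∈ Finset.range (n - 1),
          ((1 - a * (s : ℂ) * q ^ k * z) * (1 - a * (s : ℂ) * q ^ k * z⁻¹))) *
        (1 - a * (s : ℂ)⁻¹ * (1 + q ^ n) * Complex.cos (θ : ℂ) +
          a ^ 2 * q ^ (n - 1)) := by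
  intro q z P
  obtain ⟨m, rfl⟩ : ∃ m, n = m + 1 := ⟨n - 1, (Nat.succ_pred_eq_of_pos hn).symm⟩
  have hs0 : (s:ℂ) ≠ 0 := by exact_mod_cast hs.ne'
  have hz : z ≠ 0 := Complex.exp_ne_zero _
  have hcos : Complex.cos (θ:ℂ) = (z + z⁻¹)/2 := by
    rw [Complex.cos, ← Complex.exp_neg]
    ring_nf
    exact add_comm _ _
  have hq : q = (s:ℂ)^2 := rfl
  have hP : ∀ w : ℂ, P w = (∏ k ∈ range (m+1), (1 - a * q ^ k * w)) *
      (∏ k ∈ range (m+1), (1 - a * q ^ k * w⁻¹)) := fun w => prod_mul_distrib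
  have h1 : ∏ k ∈ range (m+1), (1 - a * q ^ k * ((s:ℂ) * z)) =
      (∏ k ∈ range m, (1 - a * (s:ℂ) * q ^ k * z)) * (1 - a * (s:ℂ) * q ^ m * z) := by
    rw [prod_range_succ]
    congr 1
    · exact prod_congr rfl fun k _ => by ring
    · ring
  have h2 : ∏ k ∈ range (m+1), (1 - a * q ^ k * ((s:ℂ) * z)⁻¹) =
      (1 - a * (s:ℂ)⁻¹ * z⁻¹) * ∏ k ∈ range m, (1 - a * (s:ℂ) * q ^ k * z⁻¹) := by
    rw [prod_range_succ', mul_comm]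
    congr 1
    · rw [pow_zero, mul_inv]; ring
    · refine prod_congr rfl fun k _ => ?_
      rw [mul_inv, hq, pow_succ']
      field_simp
  have h3 : ∏ k ∈ range (m+1), (1 - a * q ^ k * ((s:ℂ)⁻¹ * z)) =
      (1 - a * (s:ℂ)⁻¹ * z) * ∏ k ∈ range m, (1 - a * (s:ℂ) * q ^ k * z) := by
    rw [prod_range_succ', mul_comm]
    congr 1
    · rw [pow_zero]; ring
    · refine prod_congr rfl fun k _ => ?_
      rw [hq, pow_succ']
      field_simp
  have h4 : ∏ k ∈ range (m+1), (1 - a * q ^ k * ((s:ℂ)⁻¹ * z)⁻¹) =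
      (∏ k ∈ range m, (1 - a * (s:ℂ) * q ^ k * z⁻¹)) * (1 - a * (s:ℂ) * q ^ m * z⁻¹) := by
    rw [prod_range_succ]
    congr 1
    · refine prod_congr rfl fun k _ => ?_
      rw [mul_inv, inv_inv]
      ring
    · rw [mul_inv, inv_inv]
      ring
  rw [hP, hP, h1, h2, h3, h4, hcos, prod_mul_distrib]
  simp only [Nat.add_sub_cancel, hq]
  generalize (∏ k ∈ range m, (1 - a * (s:ℂ) * ((s:ℂ)^2) ^ k * z)) = A
  generalize (∏ k ∈ range m, (1 - a * (s:ℂ) * ((s:ℂ)^2) ^ k * z⁻¹)) = B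
  field_simp
  ring
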